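/- Let G₀ be a finite abelian group, G = ℤ × G₀, J ≥ 1, F₁,…,F_J finite subsets of G, and E ⊆ G a periodic set. If there exist sets A₁,…,A_J ⊆ G with A₁ ⊕ F₁, …, A_J ⊕ F_J pairwise disjoint and their union equal to E, then there exist periodic sets A₁',…,A_J' ⊆ G with the same property. (Periodic tiling in one dimension.) -/

import Mathlib

open Pointwise

/-- `A ⊕ F` is defined: all sums `a + f` with `a ∈ A`, `f ∈ F` are distinct. -/
def DistinctSums {G : Type*} [AddCommGroup G] (A F : Set G) : Prop :=
  ∀ a ∈ A, ∀ f ∈ F, ∀ a' ∈ A, ∀ f' ∈ F, a + f = a' + f' → a = a' ∧ f = f'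

/-- The tiling equation `⨄_j A_j ⊕ F_j = E`: each sumset is defined, the sumsets are
pairwise disjoint, and their union is `E`. -/
def TileSystem {G : Type*} [AddCommGroup G] {J : ℕ} (A F : Fin J → Set G) (E : Set G) : Prop :=
  (∀ j, DistinctSums (A j) (F j)) ∧
  (∀ i j, i ≠ j → Disjoint (A i + F i) (A j + F j)) ∧
  (⋃ j, A j + F j) = E

/-- A subset of `ℤ × G₀` is periodic if it is invariant under translation by `(r, 0)`
for some positive integer `r`. -/
def OnePeriodic {G₀ : Type*} [AddCommGroup G₀] (A : Set (ℤ × G₀)) : Prop :=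
  ∃ r : ℤ, 0 < r ∧ ∀ x : ℤ × G₀, x ∈ A ↔ x + (r, 0) ∈ A

/-- Consistency of a coloring with a tile system. -/
def Consistent {G₀ : Type*} [AddCommGroup G₀] {J : ℕ} (F : Fin J → Set (ℤ × G₀))
    (E : Set (ℤ × G₀)) (c : ℤ × G₀ → Option (Fin J × (ℤ × G₀))) : Prop :=
  (∀ x, x ∈ E ↔ (c x).isSome) ∧
  ∀ x j f, c x = some (j, f) → f ∈ F j ∧ ∀ f' ∈ F j, c (x - f + f') = some (j, f')

theorem exists_consistent {G₀ : Type*} [AddCommGroup G₀] {J : ℕ}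
    {F A : Fin J → Set (ℤ × G₀)} {E : Set (ℤ × G₀)}
    (h : TileSystem A F E) : ∃ c, Consistent F E c := by
  classical
  obtain ⟨hd, hdisj, hunion⟩ := h
  have key : ∀ x : ℤ × G₀, x ∈ E → ∃ jf : Fin J × (ℤ × G₀),
      jf.2 ∈ F jf.1 ∧ x - jf.2 ∈ A jf.1 := by
    intro x hx
    rw [← hunion] at hx
    obtain ⟨j, hj⟩ := Set.mem_iUnion.1 hx
    obtain ⟨a, ha, f, hf, hafx⟩ := Set.mem_add.1 hj
    exact ⟨(j, f), hf, by rw [← hafx]; simpa using ha⟩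
  choose jf hjf using key
  refine ⟨fun x => if h : x ∈ E then some (jf x h) else none, ?_, ?_⟩
  · intro x; by_cases hx : x ∈ E <;> simp [hx]
  · intro x j f hc
    dsimp only at hc
    by_cases hx : x ∈ E
    · rw [dif_pos hx] at hc
      have hjfx := hjf x hx
      rw [Option.some_inj] at hc
      rw [hc] at hjfx
      refine ⟨hjfx.1, fun f' hf' => ?_⟩
      set a := x - f with ha
      have haA : a ∈ A j := hjfx.2
      have hyE : a + f' ∈ E := by
        rw [← hunion]
        exact Set.mem_iUnion.2 ⟨j, Set.add_mem_add haA hf'⟩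
      have hxa : x - f + f' = a + f' := rfl
      dsimp only
      rw [hxa, dif_pos hyE, Option.some_inj]
      have hjfy := hjf (a + f') hyE
      set j' := (jf (a + f') hyE).1
      set f'' := (jf (a + f') hyE).2
      have hj' : j' = j := by
        by_contra hne
        have := hdisj j' j hne
        have h1 : a + f' ∈ A j' + F j' := by
          have : a + f' - f'' ∈ A j' := hjfy.2
          have := Set.add_mem_add this hjfy.1
          simpa using this
        have h2 : a + f' ∈ A j + F j := Set.add_mem_add haA hf'
        exact (Set.disjoint_left.1 this h1) h2
      have hf''F : f'' ∈ F j := hj' ▸ hjfy.1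
      have haA' : a + f' - f'' ∈ A j := by
        have := hjfy.2; rwa [hj'] at this
      have := hd j (a + f' - f'') haA' f'' hf''F a haA f' hf' (by abel)
      have hfe : f'' = f' := this.2
      exact Prod.ext hj' hfe
    · rw [dif_neg hx] at hc; exact absurd hc (by simp)

theorem consistent_tileSystem {G₀ : Type*} [AddCommGroup G₀] {J : ℕ}
    {F : Fin J → Set (ℤ × G₀)} {E : Set (ℤ × G₀)}
    {c : ℤ × G₀ → Option (Fin J × (ℤ × G₀))} (hc : Consistent F E c) :
    TileSystem (fun j => {a | ∃ f ∈ F j, c (a + f) = some (j, f)}) F E := by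
  obtain ⟨hsome, hloc⟩ := hc
  have hmem : ∀ j x, x ∈ ({a | ∃ f ∈ F j, c (a + f) = some (j, f)} : Set (ℤ × G₀)) + F j ↔
      ∃ f ∈ F j, c x = some (j, f) := by
    intro j x
    constructor
    · rintro hx
      obtain ⟨a, ⟨f, hf, hcf⟩, f', hf', rfl⟩ := Set.mem_add.1 hx
      have := (hloc (a + f) j f hcf).2 f' hf'
      have he : a + f - f + f' = a + f' := by abel
      rw [he] at this
      exact ⟨f', hf', this⟩
    · rintro ⟨f, hf, hcf⟩
      exact Set.mem_add.2 ⟨x - f, ⟨f, hf, by simpa using hcf⟩, f, hf, by abel⟩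
  refine ⟨?_, ?_, ?_⟩
  · intro j a ⟨f₀, hf₀, hcf₀⟩ f hf a' ⟨f₀', hf₀', hcf₀'⟩ f' hf' heq
    have h1 : c (a + f) = some (j, f) := by
      have := (hloc (a + f₀) j f₀ hcf₀).2 f hf
      have he : a + f₀ - f₀ + f = a + f := by abel
      rwa [he] at this
    have h2 : c (a' + f') = some (j, f') := by
      have := (hloc (a' + f₀') j f₀' hcf₀').2 f' hf'
      have he : a' + f₀' - f₀' + f' = a' + f' := by abel
      rwa [he] at this
    rw [heq, h2, Option.some_inj] at h1
    have hfe : f' = f := (Prod.ext_iff.1 h1).2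
    constructor
    · have : a + f = a' + f := by rw [heq, hfe]
      exact add_right_cancel this
    · exact hfe.symm
  · intro i j hij
    rw [Set.disjoint_left]
    intro x hxi hxj
    obtain ⟨f, _, hcf⟩ := (hmem i x).1 hxi
    obtain ⟨f', _, hcf'⟩ := (hmem j x).1 hxj
    rw [hcf, Option.some_inj, Prod.mk.injEq] at hcf'
    exact hij hcf'.1
  · ext x
    simp only [Set.mem_iUnion]
    constructor
    · rintro ⟨j, hj⟩
      obtain ⟨f, _, hcf⟩ := (hmem j x).1 hj
      rw [hsome x, hcf]; rfl
    · intro hx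
      have := (hsome x).1 hx
      obtain ⟨⟨j, f⟩, hjf⟩ := Option.isSome_iff_exists.1 this
      exact ⟨j, (hmem j x).2 ⟨f, (hloc x j f hjf).1, hjf⟩⟩

theorem periodic_of_c_periodic {G₀ : Type*} [AddCommGroup G₀] {J : ℕ}
    {F : Fin J → Set (ℤ × G₀)} {c : ℤ × G₀ → Option (Fin J × (ℤ × G₀))}
    {p : ℤ} (hp : 0 < p) (hper : ∀ x, c (x + (p, 0)) = c x) (j : Fin J) :
    OnePeriodic ({a | ∃ f ∈ F j, c (a + f) = some (j, f)} : Set (ℤ × G₀)) := by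
  refine ⟨p, hp, fun a => ?_⟩
  simp only [Set.mem_setOf_eq]
  constructor
  · rintro ⟨f, hf, hcf⟩
    refine ⟨f, hf, ?_⟩
    have he : a + (p, 0) + f = a + f + (p, 0) := by abel
    rw [he, hper]; exact hcf
  · rintro ⟨f, hf, hcf⟩
    refine ⟨f, hf, ?_⟩
    have he : a + (p, 0) + f = a + f + (p, 0) := by abel
    rw [he, hper] at hcf; exact hcf

theorem exists_periodic_consistent {G₀ : Type*} [AddCommGroup G₀] [Fintype G₀] {J : ℕ}
    {F : Fin J → Set (ℤ × G₀)} (hF : ∀ j, (F j).Finite)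
    {E : Set (ℤ × G₀)} (hE : OnePeriodic E)
    {c : ℤ × G₀ → Option (Fin J × (ℤ × G₀))} (hc : Consistent F E c) :
    ∃ c' p, 0 < p ∧ (∀ x : ℤ × G₀, c' (x + (p, 0)) = c' x) ∧ Consistent F E c' := by
  classical
  obtain ⟨r, hr, hEr⟩ := hE
  -- periodicity under any multiple of r
  have hper : ∀ (t : ℤ) (x : ℤ × G₀), x ∈ E ↔ x + (t * r, 0) ∈ E := by
    intro t
    induction t using Int.induction_on with
    | zero => intro x; simp [Prod.mk_zero_zero]
    | succ t ih =>
      intro x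
      have h2 := hEr (x + ((t : ℤ) * r, 0))
      have he : x + (((t : ℤ) + 1) * r, 0) = x + ((t : ℤ) * r, 0) + (r, 0) := by
        rw [add_assoc]
        congr 1
        rw [Prod.mk_add_mk, Prod.mk.injEq]
        exact ⟨by ring, by simp⟩
      rw [he]
      exact (ih x).trans h2
    | pred t ih =>
      intro x
      have h2 := hEr (x + ((-(t : ℤ) - 1) * r, 0))
      have he : x + ((-(t : ℤ) - 1) * r, 0) + (r, 0) = x + (-(t : ℤ) * r, 0) := by
        rw [add_assoc]
        congr 1
        rw [Prod.mk_add_mk, Prod.mk.injEq]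
        exact ⟨by ring, by simp⟩
      rw [he] at h2
      exact (ih x).trans h2.symm
  -- bound on first coordinates of tiles
  have hU : (⋃ j, F j).Finite := Set.finite_iUnion hF
  obtain ⟨N, hN0, hNb⟩ : ∃ N : ℤ, 0 ≤ N ∧ ∀ f ∈ ⋃ j, F j, |f.1| ≤ N := by
    obtain ⟨b, hb⟩ := (hU.image (fun f => |f.1|)).bddAbove
    exact ⟨max b 0, le_max_right _ _, fun f hf =>
      le_trans (hb (Set.mem_image_of_mem _ hf)) (le_max_left _ _)⟩
  set U := ⋃ j, F j with hUdef
  set R := r * (2 * N + 1) with hRdef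
  have hRpos : 0 < R := by positivity
  have hR2N : 2 * N < R := by nlinarith
  -- encoding into a finite type
  haveI : Finite ↥U := hU.to_subtype
  haveI : Finite ↥(Set.Icc (-(2*N)) (2*N) : Set ℤ) := (Set.finite_Icc _ _).to_subtype
  haveI : Finite (Option (Fin J × ↥U)) := by
    haveI := Fintype.ofFinite (Fin J × ↥U)
    infer_instance
  let enc : Option (Fin J × (ℤ × G₀)) → Option (Fin J × ↥U) := fun o =>
    o.bind fun jf => if h : jf.2 ∈ U then some (jf.1, ⟨jf.2, h⟩) else none
  have hmemU : ∀ z j f, c z = some (j, f) → f ∈ U := fun z j f hz =>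
    Set.mem_iUnion.2 ⟨j, (hc.2 z j f hz).1⟩
  have dec : ∀ z, c z = Option.map (fun jf : Fin J × ↥U => (jf.1, (jf.2 : ℤ × G₀)))
      (enc (c z)) := by
    intro z
    cases hz : c z with
    | none => simp [enc]
    | some jf =>
      obtain ⟨j, f⟩ := jf
      have : f ∈ U := hmemU z j f hz
      simp [enc, this]
  have enc_inj : ∀ x y : ℤ × G₀, enc (c x) = enc (c y) → c x = c y := by
    intro x y h
    rw [dec x, dec y, h]
  -- pigeonhole
  let ψ : ℕ → (↥(Set.Icc (-(2*N)) (2*N) : Set ℤ) × G₀ → Option (Fin J × ↥U)) :=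
    fun k v => enc (c ((k : ℤ) * R + v.1.1, v.2))
  obtain ⟨k₁, k₂, hk12, hψeq⟩ : ∃ k₁ k₂ : ℕ, k₁ < k₂ ∧ ψ k₁ = ψ k₂ := by
    obtain ⟨k, k', hkk, hψ⟩ := Finite.exists_ne_map_eq_of_infinite ψ
    rcases lt_or_gt_of_ne hkk with h | h
    exacts [⟨k, k', h, hψ⟩, ⟨k', k, h, hψ.symm⟩]
  set a := (k₁ : ℤ) * R with hadef
  set p := ((k₂ : ℤ) - (k₁ : ℤ)) * R with hpdef
  have hk1 : (1 : ℤ) ≤ (k₂ : ℤ) - (k₁ : ℤ) := by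
    have : (k₁ : ℤ) < (k₂ : ℤ) := by exact_mod_cast hk12
    omega
  have hp : 0 < p := by nlinarith
  have h2Np : 2 * N < p := by nlinarith
  have hrp : r ∣ p := ⟨((k₂ : ℤ) - (k₁ : ℤ)) * (2 * N + 1), by rw [hpdef, hRdef]; ring⟩
  have hmodp : ∀ u : ℤ, (u + p) % p = u % p := fun u => by
    rw [Int.add_emod, Int.emod_self, add_zero, Int.emod_emod_of_dvd _ dvd_rfl]
  -- window agreement, stated in coordinates
  have window : ∀ (u : ℤ) (v : G₀), a - 2*N ≤ u → u ≤ a + 2*N →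
      c (u + p, v) = c (u, v) := by
    intro u v h1 h2
    have hv : u - a ∈ Set.Icc (-(2*N)) (2*N) := ⟨by omega, by omega⟩
    have heq := congrFun hψeq (⟨u - a, hv⟩, v)
    have e1 : ((k₁ : ℤ) * R + (u - a), v) = ((u : ℤ), v) := by
      rw [Prod.mk.injEq]
      exact ⟨by rw [hadef] at *; ring, rfl⟩
    have e2 : ((k₂ : ℤ) * R + (u - a), v) = (u + p, v) := by
      rw [Prod.mk.injEq]
      exact ⟨by rw [hpdef, hadef] at *; ring, rfl⟩
    simp only [ψ] at heq
    rw [e1, e2] at heq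
    exact (enc_inj _ _ heq).symm
  -- the spliced coloring
  refine ⟨fun x => c (a + (x.1 - a) % p, x.2), p, hp, ?_, ?_, ?_⟩
  · intro x
    show c (a + ((x + (p, 0)).1 - a) % p, (x + (p, 0)).2) = c (a + (x.1 - a) % p, x.2)
    have h1 : (x + (p, 0)).1 - a = (x.1 - a) + p := by rw [Prod.fst_add]; ring
    have h2 : (x + (p, 0)).2 = x.2 := by rw [Prod.snd_add, add_zero]
    rw [h1, h2, hmodp]
  · -- membership iff isSome
    intro x
    obtain ⟨m, hm⟩ := hrp
    have hqE : x ∈ E ↔ (a + (x.1 - a) % p, x.2) ∈ E := by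
      have hmem := hper (-(m * ((x.1 - a) / p))) x
      have he : x + ((-(m * ((x.1 - a) / p))) * r, 0) = (a + (x.1 - a) % p, x.2) := by
        have : x = (x.1, x.2) := rfl
        rw [this, Prod.mk_add_mk, Prod.mk.injEq]
        constructor
        · rw [Int.emod_def, hm]; ring
        · exact add_zero _
      rw [he] at hmem
      exact hmem
    rw [hqE]
    exact hc.1 _
  · -- local consistency
    intro x j f hcf
    obtain ⟨hfF, hstep⟩ := hc.2 _ j f hcf
    refine ⟨hfF, fun f' hf' => ?_⟩
    have hf1 : -N ≤ f.1 ∧ f.1 ≤ N := abs_le.1 (hNb f (Set.mem_iUnion.2 ⟨j, hfF⟩))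
    have hf'1 : -N ≤ f'.1 ∧ f'.1 ≤ N := abs_le.1 (hNb f' (Set.mem_iUnion.2 ⟨j, hf'⟩))
    set s := (x.1 - a) % p with hsdef
    have hs0 : 0 ≤ s := Int.emod_nonneg _ (ne_of_gt hp)
    have hsp : s < p := Int.emod_lt_of_pos _ hp
    have hz : c (a + s - f.1 + f'.1, x.2 - f.2 + f'.2) = some (j, f') := hstep f' hf'
    set e := s - f.1 + f'.1 with hedef
    show c (a + ((x.1 - f.1 + f'.1) - a) % p, x.2 - f.2 + f'.2) = some (j, f')
    have hemod : ((x.1 - f.1 + f'.1) - a) % p = e % p := by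
      rw [Int.emod_eq_emod_iff_emod_sub_eq_zero]
      have hd : (x.1 - f.1 + f'.1 - a - e) = p * ((x.1 - a) / p) := by
        rw [hedef, hsdef, Int.emod_def]; ring
      rw [hd]
      exact Int.mul_emod_right _ _
    rw [hemod]
    rcases le_or_gt 0 e with he0 | he0
    · rcases lt_or_ge e p with hep | hep
      · -- no wrap
        rw [Int.emod_eq_of_lt he0 hep]
        have hae : a + e = a + s - f.1 + f'.1 := by rw [hedef]; ring
        rw [hae]
        exact hz
      · -- wrap from the right
        have hemod2 : e % p = e - p := by
          conv_lhs => rw [show e = (e - p) + p by ring]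
          rw [hmodp, Int.emod_eq_of_lt (by omega) (by omega)]
        rw [hemod2]
        have hwin := window (a + e - p) (x.2 - f.2 + f'.2) (by omega) (by omega)
        rw [show a + e - p + p = a + s - f.1 + f'.1 by rw [hedef]; ring] at hwin
        rw [show a + (e - p) = a + e - p by ring, ← hwin]
        exact hz
    · -- wrap from the left
      have hemod2 : e % p = e + p := by
        rw [← hmodp, Int.emod_eq_of_lt (by omega) (by omega)]
      rw [hemod2]
      have hwin := window (a + e) (x.2 - f.2 + f'.2) (by omega) (by omega)
      rw [show a + e + p = a + (e + p) by ring] at hwin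
      rw [hwin, show a + e = a + s - f.1 + f'.1 by rw [hedef]; ring]
      exact hz

theorem statement1 {G₀ : Type*} [AddCommGroup G₀] [Fintype G₀] (J : ℕ) (hJ : 1 ≤ J)
    (F : Fin J → Set (ℤ × G₀)) (hF : ∀ j, (F j).Finite)
    (E : Set (ℤ × G₀)) (hE : OnePeriodic E)
    (A : Fin J → Set (ℤ × G₀)) (hA : TileSystem A F E) :
    ∃ A' : Fin J → Set (ℤ × G₀), (∀ j, OnePeriodic (A' j)) ∧ TileSystem A' F E := by
  obtain ⟨c, hc⟩ := exists_consistent hA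
  obtain ⟨c', p, hp, hperiodic, hc'⟩ := exists_periodic_consistent hF hE hc
  exact ⟨fun j => {a | ∃ f ∈ F j, c' (a + f) = some (j, f)},
    fun j => periodic_of_c_periodic hp hperiodic j, consistent_tileSystem hc'⟩
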